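/- The form (Ê, B̂(E)) is closable on L²(Δ, μ̂; ℝ): every sequence (f_n) ⊂ B(E) such that lim_{n,m→∞} E(f_n − f_m, f_n − f_m) = 0 and f̂_n → 0 in L²(Δ, μ̂; ℝ) satisfies lim_{n→∞} E(f_n, f_n) = 0. -/

import Mathlib

open MeasureTheory Filter Topology BoundedContinuousFunction
open scoped ZeroAtInfty ENNReal

/-- The complexification of a bounded real-valued function: we regard a bounded real
function on `X` as a bounded complex function. (`X` carries the discrete topology, so
`X →ᵇ ℝ` is exactly the space of bounded real-valued functions on `X`.) -/
noncomputable def cplx {X : Type*} [TopologicalSpace X] (f : X →ᵇ ℝ) : X →ᵇ ℂ :=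
  BoundedContinuousFunction.comp Complex.ofReal Complex.isometry_ofReal.lipschitz f

/-- `A(B)`: the closure, in the supremum norm, of the complexification `B + iB` of a
set `B` of bounded real-valued functions, inside the C*-algebra of all bounded
complex-valued functions on `X`. -/
noncomputable def AofB {X : Type*} [TopologicalSpace X] (B : Set (X →ᵇ ℝ)) : Set (X →ᵇ ℂ) :=
  closure {a : X →ᵇ ℂ | ∃ f ∈ B, ∃ g ∈ B, a = cplx f + Complex.I • cplx g}

/-- `B(E)`: the bounded measurable functions on `X` whose `μ`-equivalence class lies in
`F ∩ L¹(X, μ)` (here `F` is a set of functions closed under `μ`-a.e. modification, playing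
the role of the domain of the Dirichlet form). -/
def BE {X : Type*} [TopologicalSpace X] {mX : MeasurableSpace X} (μ : Measure X)
    (F : Set (X → ℝ)) : Set (X →ᵇ ℝ) :=
  {f : X →ᵇ ℝ | Measurable (⇑f) ∧ (⇑f : X → ℝ) ∈ F ∧ Integrable (⇑f) μ}

/- ### Auxiliary lemmas -/

@[simp] lemma cplx_apply {X : Type*} [TopologicalSpace X] (f : X →ᵇ ℝ) (x : X) :
    cplx f x = (f x : ℂ) := rfl

lemma lipT (t : ℝ) : LipschitzWith 1 (fun a : ℝ => min (max a 0) t) :=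
  (LipschitzWith.id.max_const 0).min_const t

/-- Truncation of a bounded continuous function between `0` and `t`. -/
noncomputable def trunc {X : Type*} [TopologicalSpace X] (t : ℝ) (f : X →ᵇ ℝ) : X →ᵇ ℝ :=
  BoundedContinuousFunction.comp _ (lipT t) f

@[simp] lemma trunc_apply {X : Type*} [TopologicalSpace X] (t : ℝ) (f : X →ᵇ ℝ) (x : X) :
    trunc t f x = min (max (f x) 0) t := rfl

lemma sq_toReal_eLpNorm {α : Type*} [MeasurableSpace α] {μ : Measure α} {f : α → ℝ}
    (hf : MemLp f 2 μ) : ((eLpNorm f 2 μ).toReal)^2 = ∫ x, (f x)^2 ∂μ := by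
  rw [hf.eLpNorm_eq_integral_rpow_norm two_ne_zero ENNReal.ofNat_ne_top]
  rw [ENNReal.toReal_ofReal (by positivity)]
  have h2 : ((2:ℝ≥0∞).toReal) = (2:ℝ) := by simp
  rw [h2]
  have hnn : 0 ≤ ∫ a, ‖f a‖ ^ (2:ℝ) ∂μ := by positivity
  rw [← Real.rpow_natCast ((∫ a, ‖f a‖ ^ (2:ℝ) ∂μ) ^ (2:ℝ)⁻¹) 2, ← Real.rpow_mul hnn]
  norm_num

lemma term_upper {b t s : ℝ} (hb : 0 ≤ b) (ht : 0 ≤ t) (hts : t ≤ s) :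
    min b s ^ 2 - min b t ^ 2 ≤ 2 * s * (min b s - min b t) := by
  have h1 : min b t ≤ min b s := min_le_min le_rfl hts
  have h2 : min b s ≤ s := min_le_right _ _
  have h3 : 0 ≤ min b t := le_min hb ht
  nlinarith

lemma term_lower {b t s : ℝ} (hb : 0 ≤ b) (ht : 0 ≤ t) (hts : t ≤ s) :
    2 * t * (min b s - min b t) ≤ min b s ^ 2 - min b t ^ 2 := by
  rcases le_total b t with h | h
  · rw [min_eq_left h, min_eq_left (h.trans hts)]; ring_nf; exact le_rfl
  · have h0 : min b t = t := min_eq_right h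
    have h1 : t ≤ min b s := le_min h hts
    nlinarith [min_le_min (le_refl b) hts, le_min hb ht]

lemma sum_lower {b δ : ℝ} (hb : 0 ≤ b) (hδ : 0 ≤ δ) {k : ℕ} (hbk : b ≤ k * δ) :
    b ^ 2 ≤ ∑ i ∈ Finset.range k, 2 * ((i+1) * δ) * (min b ((i+1) * δ) - min b (i * δ)) := by
  have tele := Finset.sum_range_sub (fun i : ℕ => (min b (i*δ))^2) k
  push_cast at tele
  have hmin : min b (k*δ) = b := min_eq_left hbk
  have h0 : min b (0*δ) = 0 := by rw [zero_mul]; exact min_eq_right hb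
  calc b^2 = ∑ i ∈ Finset.range k, ((min b ((i+1)*δ))^2 - (min b (i*δ))^2) := by
        rw [tele, hmin, h0]; ring
    _ ≤ _ := by
        apply Finset.sum_le_sum
        intro i _
        have hi : (0:ℝ) ≤ i * δ := by positivity
        have his : (i:ℝ) * δ ≤ ((i:ℝ)+1) * δ := by nlinarith
        exact term_upper hb hi his

lemma sum_upper {b δ : ℝ} (hb : 0 ≤ b) (hδ : 0 ≤ δ) (k : ℕ) :
    ∑ i ∈ Finset.range k, 2 * ((i+1) * δ) * (min b ((i+1) * δ) - min b (i * δ))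
      ≤ b ^ 2 + 2 * δ * b := by
  have tele := Finset.sum_range_sub (fun i : ℕ => (min b (i*δ))^2) k
  push_cast at tele
  have tele2 := Finset.sum_range_sub (fun i : ℕ => min b (i*δ)) k
  push_cast at tele2
  have h0 : min b (0*δ) = 0 := by rw [zero_mul]; exact min_eq_right hb
  have step : ∑ i ∈ Finset.range k, 2 * ((i+1) * δ) * (min b ((i+1) * δ) - min b (i * δ))
      ≤ ∑ i ∈ Finset.range k, (((min b ((i+1)*δ))^2 - (min b (i*δ))^2)
          + 2 * δ * (min b ((i+1)*δ) - min b (i*δ))) := by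
    apply Finset.sum_le_sum
    intro i _
    have hi : (0:ℝ) ≤ i * δ := by positivity
    have his : (i:ℝ) * δ ≤ ((i:ℝ)+1) * δ := by nlinarith
    have := term_lower hb hi his
    nlinarith
  rw [Finset.sum_add_distrib, tele, ← Finset.mul_sum, tele2, h0] at step
  have hm1 : min b ((k:ℝ)*δ) ≤ b := min_le_left _ _
  have hm0 : 0 ≤ min b ((k:ℝ)*δ) := le_min hb (by positivity)
  nlinarith

lemma max_sq_decomp (a : ℝ) : a^2 = (max a 0)^2 + (max (-a) 0)^2 := by
  rcases le_total a 0 with h | h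
  · rw [max_eq_right h, max_eq_left (by linarith)]; ring
  · rw [max_eq_left h, max_eq_right (by linarith)]; ring

lemma abs_trunc_le {a t : ℝ} (ht : 0 ≤ t) : ‖min (max a 0) t‖ ≤ ‖a‖ := by
  rw [Real.norm_eq_abs, Real.norm_eq_abs]
  have h1 : 0 ≤ min (max a 0) t := le_min (le_max_right a 0) ht
  rw [abs_of_nonneg h1]
  exact le_trans (min_le_left _ _) (le_trans (max_le (le_abs_self a) (abs_nonneg a)) le_rfl)

/-- The form `(Ê, B̂(E))` is closable on `L²(Δ, μ̂; ℝ)`: every sequence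
`(f_n) ⊆ B(E)` such that `E(f_n − f_m, f_n − f_m) → 0` as `n, m → ∞` and such that
`f̂_n → 0` in `L²(Δ, μ̂; ℝ)` satisfies `E(f_n, f_n) → 0`.  (Recall `Ê(f̂, ĝ) = E(f, g)`.) -/
theorem transferred_form_closable {X : Type*} [Nonempty X] [TopologicalSpace X] [DiscreteTopology X]
    {mX : MeasurableSpace X} (μ : Measure X)
    (F : Set (X → ℝ)) (E : (X → ℝ) → (X → ℝ) → ℝ)
    -- (E, F) is a symmetric Dirichlet form on L²(X, μ; ℝ):
    (hF2 : ∀ f ∈ F, MemLp f 2 μ)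
    (hFae : ∀ f ∈ F, ∀ g : X → ℝ, g =ᵐ[μ] f → g ∈ F)
    (hFadd : ∀ f ∈ F, ∀ g ∈ F, f + g ∈ F)
    (hFsmul : ∀ (c : ℝ), ∀ f ∈ F, c • f ∈ F)
    (hFdense : Dense {h : Lp ℝ 2 μ | ∃ f ∈ F, (⇑h : X → ℝ) =ᵐ[μ] f})
    (hEsymm : ∀ f g, E f g = E g f)
    (hEae : ∀ f g f' : X → ℝ, f' =ᵐ[μ] f → E f g = E f' g)
    (hEadd : ∀ f ∈ F, ∀ g ∈ F, ∀ h ∈ F, E (f + g) h = E f h + E g h)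
    (hEsmul : ∀ (c : ℝ), ∀ f ∈ F, ∀ g ∈ F, E (c • f) g = c * E f g)
    (hEpos : ∀ f ∈ F, 0 ≤ E f f)
    -- closedness: F is complete in the norm (E(u,u) + ‖u‖²_{L²})^{1/2}
    (hEclosed : ∀ u : ℕ → (X → ℝ), (∀ n, u n ∈ F) →
      (∀ ε > 0, ∃ N, ∀ n ≥ N, ∀ m ≥ N,
        E (u n - u m) (u n - u m) + ((eLpNorm (u n - u m) 2 μ).toReal) ^ 2 < ε) →
      ∃ v ∈ F, Tendsto
        (fun n => E (u n - v) (u n - v) + ((eLpNorm (u n - v) 2 μ).toReal) ^ 2)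
        atTop (𝓝 0))
    -- Markov property
    (hMarkov : ∀ f ∈ F, (fun x => min (max (f x) 0) 1) ∈ F ∧
      E (fun x => min (max (f x) 0) 1) (fun x => min (max (f x) 0) 1) ≤ E f f)
    -- B(E) vanishes nowhere and is separable in the supremum norm
    (hnv : ∀ x : X, ∃ f ∈ BE μ F, f x ≠ 0)
    (hsep : TopologicalSpace.IsSeparable (BE μ F))
    {Δ : Type*} [TopologicalSpace Δ] [LocallyCompactSpace Δ] [T2Space Δ]
    [SecondCountableTopology Δ] [MeasurableSpace Δ] [BorelSpace Δ]
    (ι : X → Δ) (hι : DenseRange ι)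
    (G : (X →ᵇ ℂ) → C₀(Δ, ℂ))
    (hGeval : ∀ a ∈ AofB (BE μ F), ∀ x : X, G a (ι x) = a x)
    (hGsurj : ∀ h : C₀(Δ, ℂ), ∃ a ∈ AofB (BE μ F), G a = h)
    (ν : Measure Δ) (hνreg : ν.Regular)
    (hν : ∀ f ∈ BE μ F, Integrable (fun φ => ((G (cplx f)) φ).re) ν ∧
      ∫ x, f x ∂μ = ∫ φ, ((G (cplx f)) φ).re ∂ν)
    (u : ℕ → (X →ᵇ ℝ)) (hu : ∀ n, u n ∈ BE μ F)
    (hCauchy : ∀ ε > 0, ∃ N, ∀ n ≥ N, ∀ m ≥ N,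
      E (⇑(u n) - ⇑(u m)) (⇑(u n) - ⇑(u m)) < ε)
    (hL2 : Tendsto (fun n => eLpNorm (fun φ => ((G (cplx (u n))) φ).re) 2 ν) atTop (𝓝 0)) :
    Tendsto (fun n => E (⇑(u n)) (⇑(u n))) atTop (𝓝 0) := by
  classical
  -- 0 belongs to BE
  obtain ⟨x₀⟩ := ‹Nonempty X›
  obtain ⟨f₀, hf₀, -⟩ := hnv x₀
  have hzeroF : (0 : X → ℝ) ∈ F := by
    have h := hFsmul 0 _ hf₀.2.1
    simpa using h
  have h0BE : (0 : X →ᵇ ℝ) ∈ BE μ F := by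
    refine ⟨?_, ?_, ?_⟩
    · exact (measurable_const : Measurable (fun _ : X => (0:ℝ)))
    · exact hzeroF
    · exact (integrable_zero X ℝ μ)
  -- membership in the algebra
  have memA : ∀ f ∈ BE μ F, cplx f ∈ AofB (BE μ F) := by
    intro f hf
    apply subset_closure
    refine ⟨f, hf, 0, h0BE, ?_⟩
    ext x
    simp
  -- continuity of hat functions
  have hatCont : ∀ f : X →ᵇ ℝ, Continuous (fun φ => ((G (cplx f)) φ).re) :=
    fun f => Complex.continuous_re.comp (map_continuous (G (cplx f)))
  have hat_eval : ∀ f ∈ BE μ F, ∀ x, ((G (cplx f)) (ι x)).re = f x := by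
    intro f hf x
    rw [hGeval _ (memA f hf)]
    simp
  -- hat commutes with continuous real operations
  have hatext : ∀ f ∈ BE μ F, ∀ (ψ : ℝ → ℝ), Continuous ψ → ∀ g ∈ BE μ F,
      (∀ x, g x = ψ (f x)) →
      (fun φ => ((G (cplx g)) φ).re) = (fun φ => ψ (((G (cplx f)) φ).re)) := by
    intro f hf ψ hψ g hg hgx
    apply hι.equalizer (hatCont g) (hψ.comp (hatCont f))
    funext x
    simp only [Function.comp_apply, hat_eval _ hg, hat_eval _ hf, hgx]
  have hatext2 : ∀ f ∈ BE μ F, ∀ g ∈ BE μ F, ∀ h ∈ BE μ F,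
      (∀ x, h x = f x - g x) →
      (fun φ => ((G (cplx h)) φ).re)
        = (fun φ => (((G (cplx f)) φ).re) - (((G (cplx g)) φ).re)) := by
    intro f hf g hg h hh hhx
    apply hι.equalizer (hatCont h) ((hatCont f).sub (hatCont g))
    funext x
    simp only [Function.comp_apply, Pi.sub_apply, hat_eval _ hh, hat_eval _ hf, hat_eval _ hg, hhx]
  -- boundedness of hat functions
  have hat_bd : ∀ f ∈ BE μ F, ∀ φ, |((G (cplx f)) φ).re| ≤ ‖f‖ := by
    intro f hf
    have hcl : IsClosed {φ : Δ | |((G (cplx f)) φ).re| ≤ ‖f‖} :=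
      isClosed_le (continuous_abs.comp (hatCont f)) continuous_const
    have hsub : Set.range ι ⊆ {φ : Δ | |((G (cplx f)) φ).re| ≤ ‖f‖} := by
      rintro _ ⟨x, rfl⟩
      simp only [Set.mem_setOf_eq, hat_eval _ hf]
      exact (Real.norm_eq_abs (f x)) ▸ f.norm_coe_le_norm x
    intro φ
    have : (Set.univ : Set Δ) ⊆ {φ : Δ | |((G (cplx f)) φ).re| ≤ ‖f‖} := by
      rw [← hι.closure_range]
      exact closure_minimal hsub hcl
    exact this (Set.mem_univ φ)
  -- closure properties of BE
  have hBEsub : ∀ f ∈ BE μ F, ∀ g ∈ BE μ F, f - g ∈ BE μ F := by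
    intro f hf g hg
    refine ⟨?_, ?_, ?_⟩
    · rw [BoundedContinuousFunction.coe_sub]; exact hf.1.sub hg.1
    · have hco : ⇑(f - g) = ⇑f + (-1 : ℝ) • ⇑g := by
        funext x; simp; ring
      rw [hco]
      exact hFadd _ hf.2.1 _ (hFsmul _ _ hg.2.1)
    · rw [BoundedContinuousFunction.coe_sub]; exact hf.2.2.sub hg.2.2
  have hBEneg : ∀ f ∈ BE μ F, -f ∈ BE μ F := by
    intro f hf
    have := hBEsub 0 h0BE f hf
    rwa [zero_sub] at this
  have hBEtrunc : ∀ f ∈ BE μ F, ∀ t : ℝ, 0 < t → trunc t f ∈ BE μ F := by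
    intro f hf t ht
    refine ⟨?_, ?_, ?_⟩
    · have : ⇑(trunc t f) = fun x => min (max (f x) 0) t := rfl
      rw [this]
      exact ((measurable_id.max measurable_const).min measurable_const).comp hf.1
    · have h1 := (hMarkov ((1/t) • ⇑f) (hFsmul _ _ hf.2.1)).1
      have h2 := hFsmul t _ h1
      have hco : ⇑(trunc t f) = t • (fun x => min (max (((1/t) • ⇑f) x) 0) 1) := by
        funext x
        simp only [Pi.smul_apply, smul_eq_mul, trunc_apply]
        rw [mul_min_of_nonneg _ _ ht.le, mul_max_of_nonneg _ _ ht.le]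
        rw [mul_one, mul_zero, one_div, mul_inv_cancel_left₀ (ne_of_gt ht)]
      rw [hco]
      exact h2
    · refine hf.2.2.mono ?_ (ae_of_all _ fun x => ?_)
      · have : ⇑(trunc t f) = fun x => min (max (f x) 0) t := rfl
        rw [this]
        exact (((measurable_id.max measurable_const).min measurable_const).comp
          hf.1).aestronglyMeasurable
      · exact abs_trunc_le ht.le
  -- the transfer identity for truncations
  have transfer : ∀ f ∈ BE μ F, ∀ t : ℝ, 0 ≤ t →
      Integrable (fun φ => min (max (((G (cplx f)) φ).re) 0) t) ν ∧
      ∫ x, min (max (f x) 0) t ∂μ = ∫ φ, min (max (((G (cplx f)) φ).re) 0) t ∂ν := by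
    intro f hf t ht
    rcases eq_or_lt_of_le ht with rfl | ht
    · have h1 : (fun φ => min (max (((G (cplx f)) φ).re) 0) (0:ℝ)) = fun _ => (0:ℝ) := by
        funext φ; exact min_eq_right (le_max_right _ _)
      have h2 : (fun x => min (max (f x) 0) (0:ℝ)) = fun _ => (0:ℝ) := by
        funext x; exact min_eq_right (le_max_right _ _)
      rw [h1, h2]
      exact ⟨integrable_zero _ _ _, by simp⟩
    · have hmem := hBEtrunc f hf t ht
      have h := hν _ hmem
      have hEq := hatext f hf (fun a => min (max a 0) t)
        (((continuous_id.max continuous_const).min continuous_const)) _ hmem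
        (fun x => trunc_apply t f x)
      constructor
      · exact h.1.congr (ae_of_all _ fun φ => congrFun hEq φ)
      · calc ∫ x, min (max (f x) 0) t ∂μ = ∫ x, (trunc t f) x ∂μ := by
              simp only [trunc_apply]
          _ = ∫ φ, ((G (cplx (trunc t f))) φ).re ∂ν := h.2
          _ = ∫ φ, min (max (((G (cplx f)) φ).re) 0) t ∂ν :=
              integral_congr_ae (ae_of_all _ fun φ => congrFun hEq φ)
  -- integrability facts
  have int_trunc_mu : ∀ f ∈ BE μ F, ∀ t : ℝ, 0 ≤ t →
      Integrable (fun x => min (max (f x) 0) t) μ := by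
    intro f hf t ht
    refine hf.2.2.mono ?_ (ae_of_all _ fun x => abs_trunc_le ht) 
    exact (((measurable_id.max measurable_const).min measurable_const).comp
      hf.1).aestronglyMeasurable
  have int_maxsq_mu : ∀ f ∈ BE μ F, Integrable (fun x => (max (f x) 0)^2) μ := by
    intro f hf
    refine (hf.2.2.norm.const_mul ‖f‖).mono' ?_ (ae_of_all _ fun x => ?_)
    · exact (((hf.1.max measurable_const).pow_const 2)).aestronglyMeasurable
    · have h1 : 0 ≤ max (f x) 0 := le_max_right _ _
      have h2 : max (f x) 0 ≤ |f x| := max_le (le_abs_self _) (abs_nonneg _)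
      have h3 : |f x| ≤ ‖f‖ := (Real.norm_eq_abs (f x)) ▸ f.norm_coe_le_norm x
      rw [Real.norm_eq_abs, abs_of_nonneg (by positivity)]
      calc (max (f x) 0)^2 ≤ |f x| * |f x| := by nlinarith
        _ ≤ ‖f‖ * ‖f x‖ := by rw [Real.norm_eq_abs]; nlinarith [abs_nonneg (f x)]
  have int_max_nu : ∀ f ∈ BE μ F, Integrable (fun φ => max (((G (cplx f)) φ).re) 0) ν := by
    intro f hf
    refine (hν f hf).1.mono ?_ (ae_of_all _ fun φ => ?_)
    · exact ((hatCont f).max continuous_const).aestronglyMeasurable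
    · rw [Real.norm_eq_abs, Real.norm_eq_abs,
        abs_of_nonneg (le_max_right (((G (cplx f)) φ).re) 0)]
      exact max_le (le_abs_self _) (abs_nonneg _)
  have int_maxsq_nu : ∀ f ∈ BE μ F, Integrable (fun φ => (max (((G (cplx f)) φ).re) 0)^2) ν := by
    intro f hf
    refine ((hν f hf).1.norm.const_mul ‖f‖).mono' ?_ (ae_of_all _ fun φ => ?_)
    · exact (((hatCont f).max continuous_const).pow 2).aestronglyMeasurable
    · have h1 : 0 ≤ max (((G (cplx f)) φ).re) 0 := le_max_right _ _
      have h2 : max (((G (cplx f)) φ).re) 0 ≤ |((G (cplx f)) φ).re| :=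
        max_le (le_abs_self _) (abs_nonneg _)
      have h3 := hat_bd f hf φ
      rw [Real.norm_eq_abs, abs_of_nonneg (by positivity), Real.norm_eq_abs]
      nlinarith [abs_nonneg (((G (cplx f)) φ).re)]
  -- the key inequality for positive parts
  have subA : ∀ f ∈ BE μ F,
      ∫ x, (max (f x) 0)^2 ∂μ ≤ ∫ φ, (max (((G (cplx f)) φ).re) 0)^2 ∂ν := by
    intro f hf
    set M : ℝ := ‖f‖ + 1 with hMdef
    have hM0 : 0 < M := by positivity
    set C : ℝ := ∫ φ, |((G (cplx f)) φ).re| ∂ν with hCdef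
    have hC0 : 0 ≤ C := by positivity
    have hkey : ∀ k : ℕ, 1 ≤ k →
        ∫ x, (max (f x) 0)^2 ∂μ
          ≤ ∫ φ, (max (((G (cplx f)) φ).re) 0)^2 ∂ν + 2*(M/k)*C := by
      intro k hk
      have hk0 : (k:ℝ) ≠ 0 := Nat.cast_ne_zero.2 (by omega)
      set δ : ℝ := M / k with hδdef
      have hδ0 : 0 < δ := div_pos hM0 (by positivity)
      have hkδ : (k:ℝ) * δ = M := by
        rw [hδdef, mul_comm, div_mul_cancel₀ _ hk0]
      have int_terms_mu : ∀ i : ℕ, Integrable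
          (fun x => 2 * (((i:ℝ)+1) * δ) * (min (max (f x) 0) (((i:ℝ)+1)*δ)
            - min (max (f x) 0) ((i:ℝ)*δ))) μ :=
        fun i => (((int_trunc_mu f hf _ (by positivity)).sub
          (int_trunc_mu f hf _ (by positivity))).const_mul _)
      have int_terms_nu : ∀ i : ℕ, Integrable
          (fun φ => 2 * (((i:ℝ)+1) * δ) * (min (max (((G (cplx f)) φ).re) 0) (((i:ℝ)+1)*δ)
            - min (max (((G (cplx f)) φ).re) 0) ((i:ℝ)*δ))) ν :=
        fun i => (((transfer f hf _ (by positivity)).1.sub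
          ((transfer f hf _ (by positivity)).1)).const_mul _)
      calc ∫ x, (max (f x) 0)^2 ∂μ
          ≤ ∫ x, ∑ i ∈ Finset.range k, 2 * (((i:ℝ)+1) * δ) *
              (min (max (f x) 0) (((i:ℝ)+1)*δ) - min (max (f x) 0) ((i:ℝ)*δ)) ∂μ := by
            refine integral_mono (int_maxsq_mu f hf)
              (integrable_finset_sum _ fun i _ => int_terms_mu i) (fun x => ?_)
            refine sum_lower (le_max_right _ _) hδ0.le ?_
            rw [hkδ]
            have : |f x| ≤ ‖f‖ := (Real.norm_eq_abs (f x)) ▸ f.norm_coe_le_norm x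
            have := le_abs_self (f x)
            have := abs_nonneg (f x)
            simp only [hMdef]
            rcases le_total (f x) 0 with h | h
            · rw [max_eq_right h]; linarith
            · rw [max_eq_left h]; linarith
        _ = ∑ i ∈ Finset.range k, 2 * (((i:ℝ)+1) * δ) *
              ((∫ x, min (max (f x) 0) (((i:ℝ)+1)*δ) ∂μ)
                - ∫ x, min (max (f x) 0) ((i:ℝ)*δ) ∂μ) := by
            rw [integral_finset_sum _ (fun i _ => int_terms_mu i)]
            refine Finset.sum_congr rfl (fun i _ => ?_)
            rw [integral_const_mul _ _, integral_sub (int_trunc_mu f hf _ (by positivity))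
              (int_trunc_mu f hf _ (by positivity))]
        _ = ∑ i ∈ Finset.range k, 2 * (((i:ℝ)+1) * δ) *
              ((∫ φ, min (max (((G (cplx f)) φ).re) 0) (((i:ℝ)+1)*δ) ∂ν)
                - ∫ φ, min (max (((G (cplx f)) φ).re) 0) ((i:ℝ)*δ) ∂ν) := by
            refine Finset.sum_congr rfl (fun i _ => ?_)
            rw [(transfer f hf _ (by positivity)).2, (transfer f hf _ (by positivity)).2]
        _ = ∫ φ, ∑ i ∈ Finset.range k, 2 * (((i:ℝ)+1) * δ) *
              (min (max (((G (cplx f)) φ).re) 0) (((i:ℝ)+1)*δ)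
                - min (max (((G (cplx f)) φ).re) 0) ((i:ℝ)*δ)) ∂ν := by
            rw [integral_finset_sum _ (fun i _ => int_terms_nu i)]
            refine Finset.sum_congr rfl (fun i _ => ?_)
            rw [integral_const_mul _ _, integral_sub ((transfer f hf _ (by positivity)).1)
              ((transfer f hf _ (by positivity)).1)]
        _ ≤ ∫ φ, ((max (((G (cplx f)) φ).re) 0)^2
              + 2*δ*(max (((G (cplx f)) φ).re) 0)) ∂ν := by
            refine integral_mono (integrable_finset_sum _ fun i _ => int_terms_nu i)
              ((int_maxsq_nu f hf).add ((int_max_nu f hf).const_mul _)) (fun φ => ?_)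
            exact sum_upper (le_max_right _ _) hδ0.le k
        _ ≤ ∫ φ, (max (((G (cplx f)) φ).re) 0)^2 ∂ν + 2*(M/k)*C := by
            rw [integral_add (int_maxsq_nu f hf) ((int_max_nu f hf).const_mul _)]
            have : ∫ φ, 2*δ*(max (((G (cplx f)) φ).re) 0) ∂ν
                ≤ 2*δ*C := by
              rw [integral_const_mul _ _]
              have hle : ∫ φ, max (((G (cplx f)) φ).re) 0 ∂ν ≤ C := by
                refine integral_mono (int_max_nu f hf) (hν f hf).1.abs (fun φ => ?_)
                exact max_le (le_abs_self _) (abs_nonneg _)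
              nlinarith
            rw [hδdef] at this
            linarith
    have hlim : Tendsto (fun k : ℕ => ∫ φ, (max (((G (cplx f)) φ).re) 0)^2 ∂ν + 2*(M/k)*C)
        atTop (𝓝 (∫ φ, (max (((G (cplx f)) φ).re) 0)^2 ∂ν + 0)) := by
      refine tendsto_const_nhds.add ?_
      have h := (tendsto_const_div_atTop_nhds_zero_nat M).mul_const (2*C)
      rw [zero_mul] at h
      exact h.congr (fun k => by ring)
    rw [add_zero] at hlim
    exact ge_of_tendsto hlim (eventually_atTop.2 ⟨1, hkey⟩)
  -- the key inequality
  have keyIneq : ∀ f ∈ BE μ F,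
      ∫ x, (f x)^2 ∂μ ≤ ∫ φ, (((G (cplx f)) φ).re)^2 ∂ν := by
    intro f hf
    have hneg := hBEneg f hf
    have h1 := subA f hf
    have h2 := subA (-f) hneg
    have hEq := hatext f hf (fun a => -a) continuous_neg (-f) hneg (fun x => by simp)
    have h2' : ∫ x, (max (-(f x)) 0)^2 ∂μ
        ≤ ∫ φ, (max (-(((G (cplx f)) φ).re)) 0)^2 ∂ν := by
      calc ∫ x, (max (-(f x)) 0)^2 ∂μ = ∫ x, (max ((-f) x) 0)^2 ∂μ := by
            refine integral_congr_ae (ae_of_all _ fun x => ?_); simp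
        _ ≤ ∫ φ, (max (((G (cplx (-f))) φ).re) 0)^2 ∂ν := h2
        _ = ∫ φ, (max (-(((G (cplx f)) φ).re)) 0)^2 ∂ν := by
            refine integral_congr_ae (ae_of_all _ fun φ => ?_)
            exact congrArg (fun a => (max a 0)^2) (congrFun hEq φ)
    have int1 := int_maxsq_mu f hf
    have int2 : Integrable (fun x => (max (-(f x)) 0)^2) μ := by
      have := int_maxsq_mu (-f) hneg
      refine this.congr (ae_of_all _ fun x => ?_); simp
    have int3 := int_maxsq_nu f hf
    have int4 : Integrable (fun φ => (max (-(((G (cplx f)) φ).re)) 0)^2) ν := by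
      have := int_maxsq_nu (-f) hneg
      refine this.congr (ae_of_all _ fun φ => ?_)
      exact congrArg (fun a => (max a 0)^2) (congrFun hEq φ)
    calc ∫ x, (f x)^2 ∂μ
        = ∫ x, ((max (f x) 0)^2 + (max (-(f x)) 0)^2) ∂μ :=
          integral_congr_ae (ae_of_all _ fun x => max_sq_decomp (f x))
      _ = (∫ x, (max (f x) 0)^2 ∂μ) + ∫ x, (max (-(f x)) 0)^2 ∂μ := integral_add int1 int2
      _ ≤ (∫ φ, (max (((G (cplx f)) φ).re) 0)^2 ∂ν)
            + ∫ φ, (max (-(((G (cplx f)) φ).re)) 0)^2 ∂ν := add_le_add h1 h2'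
      _ = ∫ φ, ((max (((G (cplx f)) φ).re) 0)^2 + (max (-(((G (cplx f)) φ).re)) 0)^2) ∂ν :=
          (integral_add int3 int4).symm
      _ = ∫ φ, (((G (cplx f)) φ).re)^2 ∂ν :=
          integral_congr_ae (ae_of_all _ fun φ => (max_sq_decomp _).symm)
  -- L² membership
  have memL2μ : ∀ f ∈ BE μ F, MemLp (⇑f) 2 μ := fun f hf => hF2 _ hf.2.1
  have memL2ν : ∀ f ∈ BE μ F, MemLp (fun φ => ((G (cplx f)) φ).re) 2 ν := by
    intro f hf
    rw [memLp_two_iff_integrable_sq (hatCont f).aestronglyMeasurable]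
    refine ((hν f hf).1.norm.const_mul ‖f‖).mono' ?_ (ae_of_all _ fun φ => ?_)
    · exact ((hatCont f).pow 2).aestronglyMeasurable
    · have h3 := hat_bd f hf φ
      rw [Real.norm_eq_abs, abs_of_nonneg (sq_nonneg _), Real.norm_eq_abs]
      nlinarith [abs_nonneg (((G (cplx f)) φ).re), sq_abs (((G (cplx f)) φ).re)]
  -- real-valued L² norms of the hat functions tend to zero
  set t : ℕ → ℝ := fun n => (eLpNorm (fun φ => ((G (cplx (u n))) φ).re) 2 ν).toReal with htdef
  have ht0 : Tendsto t atTop (𝓝 0) := by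
    have h := (ENNReal.tendsto_toReal (by simp : (0:ℝ≥0∞) ≠ ⊤)).comp hL2
    simpa using (show Tendsto t atTop (𝓝 (ENNReal.toReal 0)) from h)
  have htnn : ∀ n, 0 ≤ t n := fun n => ENNReal.toReal_nonneg
  -- comparison of L²(μ) norms of differences with hat norms
  have hdiff : ∀ n m : ℕ,
      ((eLpNorm (⇑(u n) - ⇑(u m)) 2 μ).toReal)^2 ≤ (t n + t m)^2 := by
    intro n m
    have hmem : u n - u m ∈ BE μ F := hBEsub _ (hu n) _ (hu m)
    have hc : ⇑(u n) - ⇑(u m) = ⇑(u n - u m) := (BoundedContinuousFunction.coe_sub _ _).symm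
    have hEq := hatext2 _ (hu n) _ (hu m) _ hmem (fun x => by simp)
    have h1 : ((eLpNorm (⇑(u n) - ⇑(u m)) 2 μ).toReal)^2
        = ∫ x, ((u n - u m) x)^2 ∂μ := by
      rw [hc]; exact sq_toReal_eLpNorm (memL2μ _ hmem)
    have h2 : ∫ x, ((u n - u m) x)^2 ∂μ ≤ ∫ φ, (((G (cplx (u n - u m))) φ).re)^2 ∂ν :=
      keyIneq _ hmem
    have h3 : ∫ φ, (((G (cplx (u n - u m))) φ).re)^2 ∂ν
        = ((eLpNorm (fun φ => ((G (cplx (u n - u m))) φ).re) 2 ν).toReal)^2 :=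
      (sq_toReal_eLpNorm (memL2ν _ hmem)).symm
    have h4 : eLpNorm (fun φ => ((G (cplx (u n - u m))) φ).re) 2 ν
        ≤ eLpNorm (fun φ => ((G (cplx (u n))) φ).re) 2 ν
          + eLpNorm (fun φ => ((G (cplx (u m))) φ).re) 2 ν := by
      have hcongr : eLpNorm (fun φ => ((G (cplx (u n - u m))) φ).re) 2 ν
          = eLpNorm ((fun φ => ((G (cplx (u n))) φ).re)
              - (fun φ => ((G (cplx (u m))) φ).re)) 2 ν :=
        eLpNorm_congr_ae (ae_of_all _ fun φ => congrFun hEq φ)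
      rw [hcongr]
      exact eLpNorm_sub_le (memL2ν _ (hu n)).1 (memL2ν _ (hu m)).1 one_le_two
    have h5 : (eLpNorm (fun φ => ((G (cplx (u n - u m))) φ).re) 2 ν).toReal ≤ t n + t m := by
      calc (eLpNorm (fun φ => ((G (cplx (u n - u m))) φ).re) 2 ν).toReal
          ≤ (eLpNorm (fun φ => ((G (cplx (u n))) φ).re) 2 ν
              + eLpNorm (fun φ => ((G (cplx (u m))) φ).re) 2 ν).toReal :=
            ENNReal.toReal_mono
              (ENNReal.add_ne_top.2 ⟨(memL2ν _ (hu n)).2.ne, (memL2ν _ (hu m)).2.ne⟩) h4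
        _ = t n + t m :=
            ENNReal.toReal_add (memL2ν _ (hu n)).2.ne (memL2ν _ (hu m)).2.ne
    calc ((eLpNorm (⇑(u n) - ⇑(u m)) 2 μ).toReal)^2
        = ∫ x, ((u n - u m) x)^2 ∂μ := h1
      _ ≤ ∫ φ, (((G (cplx (u n - u m))) φ).re)^2 ∂ν := h2
      _ = ((eLpNorm (fun φ => ((G (cplx (u n - u m))) φ).re) 2 ν).toReal)^2 := h3
      _ ≤ (t n + t m)^2 := by
          have := ENNReal.toReal_nonneg
            (a := eLpNorm (fun φ => ((G (cplx (u n - u m))) φ).re) 2 ν)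
          nlinarith [htnn n, htnn m, h5]
  -- the combined Cauchy property
  have hcau2 : ∀ ε > 0, ∃ N, ∀ n ≥ N, ∀ m ≥ N,
      E (⇑(u n) - ⇑(u m)) (⇑(u n) - ⇑(u m))
        + ((eLpNorm (⇑(u n) - ⇑(u m)) 2 μ).toReal)^2 < ε := by
    intro ε hε
    obtain ⟨N₁, hN₁⟩ := hCauchy (ε/2) (by linarith)
    have hsq : (0:ℝ) < Real.sqrt (ε/2) / 2 := by
      have : (0:ℝ) < Real.sqrt (ε/2) := Real.sqrt_pos.2 (by linarith)
      linarith
    obtain ⟨N₂, hN₂⟩ := eventually_atTop.1 (ht0.eventually (gt_mem_nhds hsq))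
    refine ⟨max N₁ N₂, fun n hn m hm => ?_⟩
    have hE := hN₁ n (le_trans (le_max_left _ _) hn) m (le_trans (le_max_left _ _) hm)
    have htn := hN₂ n (le_trans (le_max_right _ _) hn)
    have htm := hN₂ m (le_trans (le_max_right _ _) hm)
    have hts : t n + t m < Real.sqrt (ε/2) := by linarith
    have hsqeq : (Real.sqrt (ε/2))^2 = ε/2 := Real.sq_sqrt (by linarith)
    have h6 : (t n + t m)^2 < ε/2 := by
      nlinarith [htnn n, htnn m, Real.sqrt_nonneg (ε/2)]
    have := hdiff n m
    linarith
  obtain ⟨v, hvF, hvTen⟩ := hEclosed (fun n => ⇑(u n)) (fun n => (hu n).2.1) hcau2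
  have hmemF : ∀ n, (⇑(u n) - v) ∈ F := by
    intro n
    have hco : ⇑(u n) - v = ⇑(u n) + (-1 : ℝ) • v := by funext x; simp; ring
    rw [hco]; exact hFadd _ (hu n).2.1 _ (hFsmul _ _ hvF)
  have hEpart : Tendsto (fun n => E (⇑(u n) - v) (⇑(u n) - v)) atTop (𝓝 0) :=
    squeeze_zero (fun n => hEpos _ (hmemF n))
      (fun n => le_add_of_nonneg_right (sq_nonneg _)) hvTen
  have hQpart : Tendsto (fun n => ((eLpNorm (⇑(u n) - v) 2 μ).toReal)^2) atTop (𝓝 0) :=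
    squeeze_zero (fun n => sq_nonneg _)
      (fun n => le_add_of_nonneg_left (hEpos _ (hmemF n))) hvTen
  have hQpart' : Tendsto (fun n => (eLpNorm (⇑(u n) - v) 2 μ).toReal) atTop (𝓝 0) := by
    have h := (Real.continuous_sqrt.tendsto 0).comp hQpart
    simp only [Function.comp_def, Real.sqrt_zero] at h
    refine h.congr (fun n => ?_)
    exact Real.sqrt_sq ENNReal.toReal_nonneg
  -- u n → 0 in L²(μ)
  have hUn : ∀ n, (eLpNorm (⇑(u n)) 2 μ).toReal ≤ t n := by
    intro n
    have h1 : ((eLpNorm (⇑(u n)) 2 μ).toReal)^2 = ∫ x, (u n x)^2 ∂μ :=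
      sq_toReal_eLpNorm (memL2μ _ (hu n))
    have h2 := keyIneq _ (hu n)
    have h3 : ∫ φ, (((G (cplx (u n))) φ).re)^2 ∂ν = (t n)^2 :=
      (sq_toReal_eLpNorm (memL2ν _ (hu n))).symm
    have hsq2 : ((eLpNorm (⇑(u n)) 2 μ).toReal)^2 ≤ (t n)^2 := by
      rw [h1, ← h3]; exact h2
    nlinarith [ENNReal.toReal_nonneg (a := eLpNorm (⇑(u n)) 2 μ), htnn n]
  have hUn0 : Tendsto (fun n => (eLpNorm (⇑(u n)) 2 μ).toReal) atTop (𝓝 0) :=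
    squeeze_zero (fun n => ENNReal.toReal_nonneg) hUn ht0
  -- v vanishes a.e.
  have hvmem : MemLp v 2 μ := hF2 v hvF
  have hvbound : ∀ n, (eLpNorm v 2 μ).toReal
      ≤ (eLpNorm (⇑(u n) - v) 2 μ).toReal + (eLpNorm (⇑(u n)) 2 μ).toReal := by
    intro n
    have hasm1 : AEStronglyMeasurable (⇑(u n)) μ := (memL2μ _ (hu n)).1
    have hsubmem : MemLp (⇑(u n) - v) 2 μ := (memL2μ _ (hu n)).sub hvmem
    have hres : eLpNorm v 2 μ ≤ eLpNorm (⇑(u n)) 2 μ + eLpNorm (⇑(u n) - v) 2 μ := by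
      have h := eLpNorm_sub_le (p := 2) hasm1 hsubmem.1 one_le_two
      have hco : ⇑(u n) - (⇑(u n) - v) = v := by funext x; simp
      rwa [hco] at h
    calc (eLpNorm v 2 μ).toReal
        ≤ (eLpNorm (⇑(u n)) 2 μ + eLpNorm (⇑(u n) - v) 2 μ).toReal :=
          ENNReal.toReal_mono
            (ENNReal.add_ne_top.2 ⟨(memL2μ _ (hu n)).2.ne, hsubmem.2.ne⟩) hres
      _ = (eLpNorm (⇑(u n) - v) 2 μ).toReal + (eLpNorm (⇑(u n)) 2 μ).toReal := by
          rw [ENNReal.toReal_add (memL2μ _ (hu n)).2.ne hsubmem.2.ne]; ring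
  have hv0' : (eLpNorm v 2 μ).toReal = 0 := by
    have hlim0 : Tendsto (fun n => (eLpNorm (⇑(u n) - v) 2 μ).toReal
        + (eLpNorm (⇑(u n)) 2 μ).toReal) atTop (𝓝 0) := by
      simpa using hQpart'.add hUn0
    have hge := ge_of_tendsto hlim0 (Eventually.of_forall hvbound)
    have := ENNReal.toReal_nonneg (a := eLpNorm v 2 μ)
    linarith
  have hv0 : v =ᵐ[μ] 0 := by
    have hz : eLpNorm v 2 μ = 0 := by
      rcases (ENNReal.toReal_eq_zero_iff _).1 hv0' with h | h
      · exact h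
      · exact absurd h hvmem.2.ne
    exact (eLpNorm_eq_zero_iff hvmem.1 two_ne_zero).1 hz
  -- conclude
  have hEE : ∀ n, E (⇑(u n)) (⇑(u n)) = E (⇑(u n) - v) (⇑(u n) - v) := by
    intro n
    have h1 : (⇑(u n) - v) =ᵐ[μ] ⇑(u n) := by
      filter_upwards [hv0] with x hx
      simp [Pi.sub_apply, hx]
    calc E (⇑(u n)) (⇑(u n)) = E (⇑(u n) - v) (⇑(u n)) := hEae _ _ _ h1
      _ = E (⇑(u n)) (⇑(u n) - v) := hEsymm _ _
      _ = E (⇑(u n) - v) (⇑(u n) - v) := hEae _ _ _ h1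
  exact hEpart.congr (fun n => (hEE n).symm)
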